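/- arXiv:2503.19521 — 3 statements merged into one kernel-verified Lean document; each statement's English description precedes it below -/
import Mathlib

section
/- Let H : ℝⁿ ⇉ ℝᵐ be a positively homogeneous set-valued mapping with closed graph such that H(0) = {0}. Then dom H = {z : H(z) ≠ ∅} is a closed set. -/
open Filter Topology Pointwise

/-- For a positively homogeneous closed-graph set-valued mapping
`H : ℝⁿ ⇉ ℝᵐ` with `H 0 = {0}`, the domain of `H` is closed. -/
theorem dom_closed_of_value_at_zero_trivial {n m : ℕ}
    (H : EuclideanSpace ℝ (Fin n) → Set (EuclideanSpace ℝ (Fin m)))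
    (hpos : ∀ γ : ℝ, 0 < γ → ∀ z, H (γ • z) = γ • H z)
    (hclosed : IsClosed {p : EuclideanSpace ℝ (Fin n) × EuclideanSpace ℝ (Fin m) |
      p.2 ∈ H p.1})
    (h0 : H 0 = {0}) :
    IsClosed {z : EuclideanSpace ℝ (Fin n) | (H z).Nonempty} := by
  rw [← isSeqClosed_iff_isClosed]
  intro x z hx hxz
  choose y hy using hx
  set c : ℕ → ℝ := fun k => (1 + ‖y k‖)⁻¹ with hc
  have hden : ∀ k, (0:ℝ) < 1 + ‖y k‖ := fun k => by positivity
  have hcpos : ∀ k, 0 < c k := fun k => inv_pos.2 (hden k)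
  have hcle : ∀ k, c k ≤ 1 := by
    intro k
    have h1 : (1:ℝ) ≤ 1 + ‖y k‖ := by linarith [norm_nonneg (y k)]
    exact inv_le_one_of_one_le₀ h1
  have hnorm : ∀ k, ‖c k • y k‖ = 1 - c k := by
    intro k
    rw [norm_smul, Real.norm_eq_abs, abs_of_pos (hcpos k)]
    rw [hc]
    field_simp
    ring
  have hmem : ∀ k, (c k • y k) ∈ H (c k • x k) := by
    intro k
    rw [hpos (c k) (hcpos k) (x k)]
    exact Set.smul_mem_smul_set (hy k)
  -- compactness
  have hK : IsCompact ((Set.Icc (0:ℝ) 1) ×ˢ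
      (Metric.closedBall (0 : EuclideanSpace ℝ (Fin m)) 1)) :=
    isCompact_Icc.prod (isCompact_closedBall _ _)
  have hmemK : ∀ k, ((c k, c k • y k) : ℝ × EuclideanSpace ℝ (Fin m)) ∈
      (Set.Icc (0:ℝ) 1) ×ˢ (Metric.closedBall (0 : EuclideanSpace ℝ (Fin m)) 1) := by
    intro k
    constructor
    · exact ⟨(hcpos k).le, hcle k⟩
    · rw [Metric.mem_closedBall, dist_zero_right, hnorm k]
      linarith [(hcpos k).le]
  obtain ⟨⟨cinf, u⟩, haK, φ, hφ, hlim⟩ := hK.tendsto_subseq hmemK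
  have hclim : Tendsto (fun k => c (φ k)) atTop (𝓝 cinf) :=
    (continuous_fst.tendsto _).comp hlim
  have hulim : Tendsto (fun k => c (φ k) • y (φ k)) atTop (𝓝 u) :=
    (continuous_snd.tendsto _).comp hlim
  have hxlim : Tendsto (fun k => x (φ k)) atTop (𝓝 z) :=
    hxz.comp hφ.tendsto_atTop
  have hpairlim : Tendsto (fun k => ((c (φ k) • x (φ k), c (φ k) • y (φ k)) :
      EuclideanSpace ℝ (Fin n) × EuclideanSpace ℝ (Fin m))) atTop
      (𝓝 (cinf • z, u)) :=
    (hclim.smul hxlim).prodMk_nhds hulim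
  have hgraph : u ∈ H (cinf • z) := by
    have := hclosed.mem_of_tendsto hpairlim
      (Filter.Eventually.of_forall fun k => hmem (φ k))
    exact this
  rcases lt_or_eq_of_le (haK.1.1 : (0:ℝ) ≤ cinf) with hcpos' | hczero
  · -- cinf > 0 : H z is nonempty
    have : H z = cinf⁻¹ • H (cinf • z) := by
      have := hpos cinf⁻¹ (inv_pos.2 hcpos') (cinf • z)
      rwa [inv_smul_smul₀ hcpos'.ne'] at this
    rw [Set.mem_setOf_eq, this]
    exact ⟨cinf⁻¹ • u, Set.smul_mem_smul_set hgraph⟩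
  · -- cinf = 0 : contradiction
    exfalso
    have hc0 : cinf = 0 := hczero.symm
    have hu0 : u ∈ H 0 := by
      rw [hc0, zero_smul] at hgraph
      exact hgraph
    have hueq : u = 0 := by rw [h0] at hu0; exact hu0
    have hnlim : Tendsto (fun k => ‖c (φ k) • y (φ k)‖) atTop (𝓝 ‖u‖) :=
      hulim.norm
    have hnlim' : Tendsto (fun k => ‖c (φ k) • y (φ k)‖) atTop (𝓝 (1 - cinf)) := by
      simp only [hnorm]
      exact tendsto_const_nhds.sub hclim
    have : ‖u‖ = 1 - cinf := tendsto_nhds_unique hnlim hnlim'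
    rw [hueq, hc0, norm_zero] at this
    norm_num at this
end

section
/- Let Γ : ℝᵏ × ℝᵐ ⇉ ℝ^q be such that for each ξ, the mapping Γ(ξ,·) is positively homogeneous and, for a fixed ξ̄, the graph of Γ is closed, and suppose H(z) := Γ(ξ̄, z) has the special structure H(z) = {0} × 𝒯(z) for a mapping 𝒯 : ℝᵐ ⇉ ℝ^{q-s} with 𝒯(0) = {0} and 𝒯⁻¹(0) = {0}. Then the mapping 𝒦(ξ,z) := cone(Γ(ξ,z)) is outer semicontinuous relative to ℝᵏ × bd(𝔹) at (ξ̄, z) for every unit vector z ∈ dom H: that is, whenever (ξᵏ, zᵏ) → (ξ̄, z) with ‖zᵏ‖ = 1 and ηᵏ ∈ cone(Γ(ξᵏ, zᵏ)) with ηᵏ → η, one has η ∈ cone(Γ(ξ̄, z)). -/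
open Filter Topology Pointwise

/-- The conic hull `cone(Z) = ⋃_{γ ≥ 0} γ • Z`. -/
def coneHull {V : Type*} [AddCommGroup V] [Module ℝ V] (Z : Set V) : Set V :=
  {y | ∃ γ : ℝ, 0 ≤ γ ∧ ∃ x ∈ Z, y = γ • x}

/-- Let `Γ(ξ,·)` be positively homogeneous for each `ξ`, with closed graph,
and suppose `H(z) := Γ(ξ̄,z) = {0} × 𝒯(z)` where `𝒯(0) = {0}` and `𝒯⁻¹(0) = {0}`.
Then `𝒦(ξ,z) := cone(Γ(ξ,z))` is outer semicontinuous relative to `ℝᵏ × bd 𝔹` at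
`(ξ̄, z)` for every unit vector `z ∈ dom H`. -/
theorem coneHull_map_outer_semicontinuous {k m s r : ℕ}
    (Γ : EuclideanSpace ℝ (Fin k) → EuclideanSpace ℝ (Fin m) →
      Set (EuclideanSpace ℝ (Fin s) × EuclideanSpace ℝ (Fin r)))
    (T : EuclideanSpace ℝ (Fin m) → Set (EuclideanSpace ℝ (Fin r)))
    (xb : EuclideanSpace ℝ (Fin k))
    (hpos : ∀ ξ, ∀ γ : ℝ, 0 < γ → ∀ z, Γ ξ (γ • z) = γ • Γ ξ z)
    (hclosed : IsClosed
      {p : (EuclideanSpace ℝ (Fin k) × EuclideanSpace ℝ (Fin m)) ×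
        (EuclideanSpace ℝ (Fin s) × EuclideanSpace ℝ (Fin r)) | p.2 ∈ Γ p.1.1 p.1.2})
    (hstruct : ∀ z, Γ xb z = {(0 : EuclideanSpace ℝ (Fin s))} ×ˢ T z)
    (hT0 : T 0 = {0})
    (hTinv : ∀ z, (0 : EuclideanSpace ℝ (Fin r)) ∈ T z → z = 0) :
    ∀ z : EuclideanSpace ℝ (Fin m), ‖z‖ = 1 → (Γ xb z).Nonempty →
      ∀ (ξs : ℕ → EuclideanSpace ℝ (Fin k)) (zs : ℕ → EuclideanSpace ℝ (Fin m))
        (ηs : ℕ → EuclideanSpace ℝ (Fin s) × EuclideanSpace ℝ (Fin r))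
        (η : EuclideanSpace ℝ (Fin s) × EuclideanSpace ℝ (Fin r)),
        (∀ j, ‖zs j‖ = 1) →
        (∀ j, ηs j ∈ coneHull (Γ (ξs j) (zs j))) →
        Tendsto ξs atTop (nhds xb) → Tendsto zs atTop (nhds z) →
        Tendsto ηs atTop (nhds η) →
        η ∈ coneHull (Γ xb z) := by
  intro z hz hne ξs zs ηs η hzs hηs hξtend hztend hηtend
  choose γ hγ0 w hw hηw using hηs
  obtain ⟨w0, hw0⟩ := hne
  have hzero : (0 : EuclideanSpace ℝ (Fin s) × EuclideanSpace ℝ (Fin r)) ∈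
      coneHull (Γ xb z) := ⟨0, le_refl 0, w0, hw0, by simp⟩
  by_cases hb : ∃ C : ℝ, ∃ᶠ j in atTop, γ j ≤ C
  · obtain ⟨C, hC⟩ := hb
    have hfreq : ∃ᶠ j in atTop, γ j ∈ Set.Icc (0:ℝ) C :=
      hC.mono fun j h => ⟨hγ0 j, h⟩
    obtain ⟨γ0, hγ0mem, φ, hφ, hφtend⟩ := isCompact_Icc.tendsto_subseq' hfreq
    have hφat : Tendsto φ atTop atTop := hφ.tendsto_atTop
    by_cases h0 : ∃ᶠ j in atTop, γ (φ j) = 0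
    · obtain ⟨ψ, hψ, hψ0⟩ := Filter.extraction_of_frequently_atTop h0
      have h1 : Tendsto (fun j => ηs (φ (ψ j))) atTop (nhds η) :=
        hηtend.comp (hφat.comp hψ.tendsto_atTop)
      have h2 : Tendsto (fun j => ηs (φ (ψ j))) atTop (nhds 0) := by
        have : ∀ j, ηs (φ (ψ j)) = 0 := by
          intro j
          rw [hηw (φ (ψ j)), hψ0 j, zero_smul]
        simp only [this]; exact tendsto_const_nhds
      have : η = 0 := tendsto_nhds_unique h1 h2
      rw [this]; exact hzero
    · have hpos' : ∀ᶠ j in atTop, 0 < γ (φ j) := by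
        rw [Filter.not_frequently] at h0
        exact h0.mono fun j h => lt_of_le_of_ne (hγ0 (φ j)) (Ne.symm h)
      set p : ℕ → (EuclideanSpace ℝ (Fin k) × EuclideanSpace ℝ (Fin m)) ×
          (EuclideanSpace ℝ (Fin s) × EuclideanSpace ℝ (Fin r)) :=
        fun j => ((ξs (φ j), γ (φ j) • zs (φ j)), ηs (φ j)) with hp
      have hptend : Tendsto p atTop (nhds ((xb, γ0 • z), η)) := by
        refine Tendsto.prodMk_nhds (Tendsto.prodMk_nhds ?_ ?_) ?_
        · exact hξtend.comp hφat
        · exact hφtend.smul (hztend.comp hφat)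
        · exact hηtend.comp hφat
      have hpmem : ∀ᶠ j in atTop, p j ∈
          {p : (EuclideanSpace ℝ (Fin k) × EuclideanSpace ℝ (Fin m)) ×
            (EuclideanSpace ℝ (Fin s) × EuclideanSpace ℝ (Fin r)) |
            p.2 ∈ Γ p.1.1 p.1.2} := by
        refine hpos'.mono fun j hj => ?_
        show ηs (φ j) ∈ Γ (ξs (φ j)) (γ (φ j) • zs (φ j))
        rw [hpos _ _ hj, hηw (φ j)]
        exact Set.smul_mem_smul_set (hw (φ j))
      have hmem : η ∈ Γ xb (γ0 • z) := hclosed.mem_of_tendsto hptend hpmem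
      rcases eq_or_lt_of_le hγ0mem.1 with h | h
      · rw [← h, zero_smul, hstruct 0, hT0] at hmem
        have : η = 0 := by
          obtain ⟨h1, h2⟩ := hmem
          exact Prod.ext h1 h2
        rw [this]; exact hzero
      · rw [hpos xb γ0 h z] at hmem
        obtain ⟨v, hv, hv'⟩ := hmem
        exact ⟨γ0, le_of_lt h, v, hv, hv'.symm⟩
  · push_neg at hb
    have htop : Tendsto γ atTop atTop := by
      refine tendsto_atTop.2 fun b => ?_
      have := hb b
      exact this.mono fun j h => le_of_lt h
    have hinv : Tendsto (fun j => (γ j)⁻¹) atTop (nhds 0) :=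
      htop.inv_tendsto_atTop
    have hpos' : ∀ᶠ j in atTop, 0 < γ j := htop.eventually_gt_atTop 0
    set q : ℕ → (EuclideanSpace ℝ (Fin k) × EuclideanSpace ℝ (Fin m)) ×
        (EuclideanSpace ℝ (Fin s) × EuclideanSpace ℝ (Fin r)) :=
      fun j => ((ξs j, zs j), (γ j)⁻¹ • ηs j) with hq
    have hqtend : Tendsto q atTop (nhds ((xb, z), 0)) := by
      refine Tendsto.prodMk_nhds (Tendsto.prodMk_nhds hξtend hztend) ?_
      simpa using hinv.smul hηtend
    have hqmem : ∀ᶠ j in atTop, q j ∈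
        {p : (EuclideanSpace ℝ (Fin k) × EuclideanSpace ℝ (Fin m)) ×
          (EuclideanSpace ℝ (Fin s) × EuclideanSpace ℝ (Fin r)) |
          p.2 ∈ Γ p.1.1 p.1.2} := by
      refine hpos'.mono fun j hj => ?_
      show (γ j)⁻¹ • ηs j ∈ Γ (ξs j) (zs j)
      rw [hηw j, smul_smul, inv_mul_cancel₀ (ne_of_gt hj), one_smul]
      exact hw j
    have hmem : (0 : EuclideanSpace ℝ (Fin s) × EuclideanSpace ℝ (Fin r)) ∈
        Γ xb z := hclosed.mem_of_tendsto hqtend hqmem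
    rw [hstruct z] at hmem
    have hz0 : z = 0 := hTinv z hmem.2
    rw [hz0, norm_zero] at hz
    exact absurd hz zero_ne_one
end

section
/- Let F : ℝⁿ → ℝᵐ be strictly differentiable at x̄ and C : ℝⁿ ⇉ ℝᵐ closed-graph with (x̄,ȳ) ∈ gph C. Suppose there exists (v̄,z̄) ≠ (0,0) with (v̄,−z̄) ∈ N_{gph C}(x̄,ȳ) and ∇F(x̄)z̄ + v̄ = 0 (i.e., the regularity modulus R_𝒬 of the associated mapping vanishes). Then z̄ ≠ 0 and 0 ∈ ∇F(x̄)z̄ + D*C(x̄|ȳ)(z̄), hence inf_{‖z‖=1} dist[0, ∇F(x̄)z + D*C(x̄|ȳ)(z)] = 0. -/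
open Filter Topology Pointwise

/-- The (Bouligand–Severi) tangent/contingent cone to `C` at `x`:
`v ∈ T_C(x)` iff there are `tₖ ↓ 0` and `wₖ → v` with `x + tₖ • wₖ ∈ C`. -/
def tangentConeAtPt {E : Type*} [AddCommGroup E] [Module ℝ E] [TopologicalSpace E]
    (C : Set E) (x : E) : Set E :=
  {v | ∃ t : ℕ → ℝ, ∃ w : ℕ → E, (∀ j, 0 < t j) ∧
    Tendsto t atTop (nhds 0) ∧ Tendsto w atTop (nhds v) ∧ ∀ j, x + t j • w j ∈ C}

/-- The polar cone of `T` with respect to the pairing `ip`. -/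
def polarConeWith {E : Type*} (ip : E → E → ℝ) (T : Set E) : Set E :=
  {v | ∀ w ∈ T, ip v w ≤ 0}

/-- The limiting (Mordukhovich) normal cone to `C` at `x̄`, with respect to the
pairing `ip`: all limits of polars of tangent cones at points of `C` tending to `x̄`. -/
def limNormalCone {E : Type*} [AddCommGroup E] [Module ℝ E] [TopologicalSpace E]
    (ip : E → E → ℝ) (C : Set E) (xb : E) : Set E :=
  {v | ∃ x : ℕ → E, ∃ vs : ℕ → E, (∀ j, x j ∈ C) ∧
    (∀ j, vs j ∈ polarConeWith ip (tangentConeAtPt C (x j))) ∧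
    Tendsto x atTop (nhds xb) ∧ Tendsto vs atTop (nhds v)}

/-- The coderivative `D*S(x̄|ȳ)(z) = {v | (v, −z) ∈ N_{gph S}(x̄, ȳ)}`. -/
def coderivWith {E F : Type*} [AddCommGroup E] [Module ℝ E] [TopologicalSpace E]
    [AddCommGroup F] [Module ℝ F] [TopologicalSpace F]
    (ipE : E → E → ℝ) (ipF : F → F → ℝ)
    (S : E → Set F) (xb : E) (yb : F) (z : F) : Set E :=
  {v | (v, -z) ∈ limNormalCone (fun p q => ipE p.1 q.1 + ipF p.2 q.2)
    {p : E × F | p.2 ∈ S p.1} (xb, yb)}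

/-- The Euclidean inner product pairing. -/
noncomputable def eip {E : Type*} [NormedAddCommGroup E] [InnerProductSpace ℝ E] :
    E → E → ℝ := fun v w => inner ℝ v w

/-- If there exists `(v̄,z̄) ≠ (0,0)` with `(v̄,−z̄) ∈ N_{gph C}(x̄,ȳ)`
and `∇F(x̄)z̄ + v̄ = 0`, then `z̄ ≠ 0`, `0 ∈ ∇F(x̄)z̄ + D*C(x̄|ȳ)(z̄)`, and
`inf_{‖z‖=1} dist[0, ∇F(x̄)z + D*C(x̄|ȳ)(z)] = 0`. -/
theorem RQ_zero_implies_RSigma_zero {n m : ℕ}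
    (F : EuclideanSpace ℝ (Fin n) → EuclideanSpace ℝ (Fin m))
    (A : EuclideanSpace ℝ (Fin n) →L[ℝ] EuclideanSpace ℝ (Fin m))
    (xb : EuclideanSpace ℝ (Fin n)) (hF : HasStrictFDerivAt F A xb)
    (C : EuclideanSpace ℝ (Fin n) → Set (EuclideanSpace ℝ (Fin m)))
    (hC : IsClosed {a : EuclideanSpace ℝ (Fin n) × EuclideanSpace ℝ (Fin m) |
      a.2 ∈ C a.1})
    (yb : EuclideanSpace ℝ (Fin m)) (hyb : yb ∈ C xb)
    (vb : EuclideanSpace ℝ (Fin n)) (zb : EuclideanSpace ℝ (Fin m))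
    (hne : (vb, zb) ≠ 0)
    (hmem : (vb, -zb) ∈ limNormalCone (fun a b => eip a.1 b.1 + eip a.2 b.2)
      {a : EuclideanSpace ℝ (Fin n) × EuclideanSpace ℝ (Fin m) | a.2 ∈ C a.1} (xb, yb))
    (heq : ContinuousLinearMap.adjoint A zb + vb = 0) :
    zb ≠ 0 ∧
    (0 : EuclideanSpace ℝ (Fin n)) ∈
      (fun v => ContinuousLinearMap.adjoint A zb + v) '' coderivWith eip eip C xb yb zb ∧
    (⨅ z ∈ {z : EuclideanSpace ℝ (Fin m) | ‖z‖ = 1},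
        EMetric.infEdist (0 : EuclideanSpace ℝ (Fin n))
          ((fun v => ContinuousLinearMap.adjoint A z + v) ''
            coderivWith eip eip C xb yb z)) = 0 := by
  have hz : zb ≠ 0 := by
    intro h
    apply hne
    have hv : vb = 0 := by
      have h2 := heq
      rw [h] at h2
      simpa using h2
    simp [h, hv, Prod.ext_iff]
  have hmem2 : (0 : EuclideanSpace ℝ (Fin n)) ∈
      (fun v => ContinuousLinearMap.adjoint A zb + v) '' coderivWith eip eip C xb yb zb :=
    ⟨vb, hmem, heq⟩
  refine ⟨hz, hmem2, ?_⟩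
  set c : ℝ := ‖zb‖⁻¹ with hcdef
  have hc : 0 < c := inv_pos.mpr (norm_pos_iff.mpr hz)
  have hscale : (c • vb, -(c • zb)) ∈ limNormalCone
      (fun a b => eip a.1 b.1 + eip a.2 b.2)
      {a : EuclideanSpace ℝ (Fin n) × EuclideanSpace ℝ (Fin m) | a.2 ∈ C a.1} (xb, yb) := by
    obtain ⟨x, vs, hxC, hpol, hx, hvs⟩ := hmem
    refine ⟨x, fun j => c • vs j, hxC, ?_, hx, ?_⟩
    · intro j w hw
      have h0 := hpol j w hw
      have : eip (c • vs j).1 w.1 + eip (c • vs j).2 w.2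
          = c * (eip (vs j).1 w.1 + eip (vs j).2 w.2) := by
        simp [eip, Prod.smul_fst, Prod.smul_snd, real_inner_smul_left, mul_add, Finset.mul_sum, mul_assoc]
      show eip (c • vs j).1 w.1 + eip (c • vs j).2 w.2 ≤ 0
      rw [this]
      exact mul_nonpos_of_nonneg_of_nonpos hc.le h0
    · have := hvs.const_smul c
      convert this using 2
      simp [Prod.ext_iff, smul_neg]
  have hnorm : ‖c • zb‖ = 1 := by
    rw [norm_smul, Real.norm_eq_abs, abs_of_pos hc, hcdef]
    exact inv_mul_cancel₀ (norm_ne_zero_iff.mpr hz)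
  refine le_antisymm (le_trans (iInf₂_le (c • zb) hnorm) ?_) zero_le
  have h0mem : (0 : EuclideanSpace ℝ (Fin n)) ∈
      (fun v => ContinuousLinearMap.adjoint A (c • zb) + v) ''
        coderivWith eip eip C xb yb (c • zb) := by
    refine ⟨c • vb, hscale, ?_⟩
    show ContinuousLinearMap.adjoint A (c • zb) + c • vb = 0
    rw [map_smul, ← smul_add, heq, smul_zero]
  exact (EMetric.infEdist_zero_of_mem h0mem).le
end
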